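/- Let I ≥ 2 be an integer, a > 0, m > 0 with a·m ≥ (2I−4)/(I−1), and for each i ∈ {1,…,I} let f_i, u_i : ℝ → ℝ be twice differentiable with f_i'' ≥ m and −u_i'' ≥ m everywhere, with capacity bounds p̲_i ≤ p̄_i, d̲_i ≤ d̄_i. Let Y = Π_{i=1}^I [p̲_i, p̄_i] × [d̲_i, d̄_i], define φ(p, d) = Σ_i f_i(p_i) − Σ_i u_i(d_i) + Σ_i (d_i − p_i)²/(2a(I−1)) − (Σ_i d_i − Σ_i p_i)²/(2aI) and L((p,d), λ) = φ(p,d) − λ·Σ_{i=1}^I (p_i − d_i). If there exists (p⁰, d⁰) ∈ Y with Σ_i p⁰_i = Σ_i d⁰_i, then L has a saddle point on Y × ℝ: there exist (p*, d*) ∈ Y and λ* ∈ ℝ such that L((p*,d*), λ) ≤ L((p*,d*), λ*) ≤ L((p,d), λ*) for all (p,d) ∈ Y and all λ ∈ ℝ. -/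

import Mathlib

open Finset

section EsgAux

lemma esg_deriv_of_contDiff2 {g : ℝ → ℝ} (hg : ContDiff ℝ 2 g) :
    Differentiable ℝ g ∧ Differentiable ℝ (deriv g) := by
  have h2 : ContDiff ℝ ((1 : WithTop ℕ∞) + 1) g := by norm_num; exact hg
  rw [contDiff_succ_iff_deriv] at h2
  exact ⟨h2.1, h2.2.2.differentiable (by norm_num)⟩

lemma esg_convexOn_shift {g : ℝ → ℝ} {m : ℝ} (hg : ContDiff ℝ 2 g)
    (hg'' : ∀ x, m ≤ iteratedDeriv 2 g x) :
    ConvexOn ℝ Set.univ (fun x => g x - m / 2 * x ^ 2) := by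
  obtain ⟨hd, hd'⟩ := esg_deriv_of_contDiff2 hg
  have hq : Differentiable ℝ (fun x : ℝ => m / 2 * x ^ 2) := by fun_prop
  have hG : Differentiable ℝ (fun x => g x - m / 2 * x ^ 2) := hd.sub hq
  have hderiv : deriv (fun x => g x - m / 2 * x ^ 2) = fun x => deriv g x - m * x := by
    funext x
    rw [deriv_fun_sub (hd x) (hq x)]
    simp [deriv_pow_field]
    ring
  refine convexOn_univ_of_deriv2_nonneg hG ?_ ?_
  · rw [hderiv]; exact hd'.sub (by fun_prop)
  · intro x
    have h1 : deriv^[2] (fun x => g x - m / 2 * x ^ 2) x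
        = deriv (fun x => deriv g x - m * x) x := by
      simp only [Function.iterate_succ, Function.iterate_zero, Function.comp_apply, id_eq]
      rw [hderiv]
    rw [h1, deriv_fun_sub (hd' x) (by fun_prop)]
    have h2 : deriv (fun x => m * x) x = m := by
      have := ((hasDerivAt_id x).const_mul m).deriv
      simpa using this
    have h3 : iteratedDeriv 2 g x = deriv (deriv g) x := by
      rw [iteratedDeriv_succ, iteratedDeriv_one]
    have := hg'' x
    rw [h3] at this
    rw [h2]
    linarith

lemma esg_sum_sq_mix {I : ℕ} (θ σ : ℝ) (h : θ + σ = 1) (u v : Fin I → ℝ) :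
    ∑ i, (θ * u i + σ * v i) ^ 2
      = θ * ∑ i, (u i) ^ 2 + σ * ∑ i, (v i) ^ 2 - θ * σ * ∑ i, (u i - v i) ^ 2 := by
  rw [Finset.mul_sum, Finset.mul_sum, Finset.mul_sum, ← Finset.sum_add_distrib,
    ← Finset.sum_sub_distrib]
  refine Finset.sum_congr rfl fun i _ => ?_
  linear_combination (θ * u i ^ 2 + σ * v i ^ 2) * h

lemma esg_sq_mix (θ σ p q : ℝ) (h : θ + σ = 1) :
    (θ * p + σ * q) ^ 2 = θ * p ^ 2 + σ * q ^ 2 - θ * σ * (p - q) ^ 2 := by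
  linear_combination (θ * p ^ 2 + σ * q ^ 2) * h

lemma esg_quad_nonneg (I : ℕ) (hI : 2 ≤ I) (a m : ℝ) (ha : 0 < a) (hm : 0 < m)
    (ham : (2 * (I : ℝ) - 4) / ((I : ℝ) - 1) ≤ a * m) (wp wd : Fin I → ℝ) :
    0 ≤ m / 2 * (∑ i, ((wp i) ^ 2 + (wd i) ^ 2))
      + (∑ i, (wd i - wp i) ^ 2) / (2 * a * ((I : ℝ) - 1))
      - (∑ i, wd i - ∑ i, wp i) ^ 2 / (2 * a * (I : ℝ)) := by
  have hA : (2 : ℝ) ≤ (I : ℝ) := by exact_mod_cast hI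
  have h1 : (0 : ℝ) < (I : ℝ) - 1 := by linarith
  have ham' : 2 * (I : ℝ) - 4 ≤ a * m * ((I : ℝ) - 1) := by
    rw [div_le_iff₀ h1] at ham; linarith
  have hcs : (∑ i, wd i - ∑ i, wp i) ^ 2 ≤ (I : ℝ) * ∑ i, (wd i - wp i) ^ 2 := by
    rw [← Finset.sum_sub_distrib]
    have := sq_sum_le_card_mul_sum_sq (s := Finset.univ)
      (f := fun i : Fin I => wd i - wp i)
    simpa using this
  have hI0 : (0 : ℝ) < (I : ℝ) := by linarith
  have h2 : (∑ i, wd i - ∑ i, wp i) ^ 2 / (2 * a * (I : ℝ))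
      ≤ (∑ i, (wd i - wp i) ^ 2) / (2 * a) := by
    rw [div_le_div_iff₀ (by positivity) (by positivity)]
    nlinarith [hcs, ha]
  have h3 : 0 ≤ m / 2 * (∑ i, ((wp i) ^ 2 + (wd i) ^ 2))
      + (∑ i, (wd i - wp i) ^ 2) / (2 * a * ((I : ℝ) - 1))
      - (∑ i, (wd i - wp i) ^ 2) / (2 * a) := by
    have hsplit : m / 2 * (∑ i, ((wp i) ^ 2 + (wd i) ^ 2))
        + (∑ i, (wd i - wp i) ^ 2) / (2 * a * ((I : ℝ) - 1))
        - (∑ i, (wd i - wp i) ^ 2) / (2 * a)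
        = ∑ i, (m / 2 * ((wp i) ^ 2 + (wd i) ^ 2)
            + (wd i - wp i) ^ 2 / (2 * a * ((I : ℝ) - 1))
            - (wd i - wp i) ^ 2 / (2 * a)) := by
      simp only [Finset.sum_sub_distrib, Finset.sum_add_distrib, ← Finset.mul_sum,
        ← Finset.sum_div]
    rw [hsplit]
    refine Finset.sum_nonneg fun i _ => ?_
    set x := wp i; set y := wd i
    have key : (y - x) ^ 2 / (2 * a) - (y - x) ^ 2 / (2 * a * ((I : ℝ) - 1))
        ≤ m / 2 * (x ^ 2 + y ^ 2) := by
      rw [div_sub_div _ _ (by positivity) (by positivity), div_le_iff₀ (by positivity)]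
      nlinarith [mul_nonneg (by linarith : (0:ℝ) ≤ (I : ℝ) - 2)
          (by nlinarith [sq_nonneg (x + y)] : (0:ℝ) ≤ 2 * (x ^ 2 + y ^ 2) - (y - x) ^ 2),
        mul_nonneg (by linarith : (0:ℝ) ≤ a * m * ((I : ℝ) - 1) - (2 * (I : ℝ) - 4))
          (by positivity : (0:ℝ) ≤ x ^ 2 + y ^ 2), ha.le, hm.le, sq_nonneg (y - x),
        mul_pos ha ha, ha]
    linarith
  linarith

lemma esg_convexOn_sum {ι : Type*} {E : Type*} [AddCommGroup E] [Module ℝ E]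
    (s : Finset ι) {t : Set E} (ht : Convex ℝ t) (g : ι → E → ℝ)
    (hg : ∀ i ∈ s, ConvexOn ℝ t (g i)) :
    ConvexOn ℝ t (fun x => ∑ i ∈ s, g i x) := by
  classical
  induction s using Finset.induction with
  | empty => simpa using convexOn_const 0 ht
  | @insert a s ha ih =>
    have h1 : (fun x => ∑ i ∈ insert a s, g i x)
        = g a + fun x => ∑ i ∈ s, g i x := by
      funext x; simp [Finset.sum_insert ha]
    rw [h1]
    exact (hg a (Finset.mem_insert_self a s)).add
      (ih fun i hi => hg i (Finset.mem_insert_of_mem hi))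

lemma esg_convexOn_coord1 {I : ℕ} {g : ℝ → ℝ} (hg : ConvexOn ℝ Set.univ g) (i : Fin I) :
    ConvexOn ℝ Set.univ (fun pd : (Fin I → ℝ) × (Fin I → ℝ) => g (pd.1 i)) := by
  refine ⟨convex_univ, fun x _ y _ θ σ hθ hσ hs => ?_⟩
  have h1 : (θ • x + σ • y).1 i = θ • (x.1 i) + σ • (y.1 i) := by
    simp [Prod.fst_add, Prod.smul_fst]
  show g ((θ • x + σ • y).1 i) ≤ θ • g (x.1 i) + σ • g (y.1 i)
  rw [h1]
  exact hg.2 (Set.mem_univ _) (Set.mem_univ _) hθ hσ hs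

lemma esg_convexOn_coord2 {I : ℕ} {g : ℝ → ℝ} (hg : ConvexOn ℝ Set.univ g) (i : Fin I) :
    ConvexOn ℝ Set.univ (fun pd : (Fin I → ℝ) × (Fin I → ℝ) => g (pd.2 i)) := by
  refine ⟨convex_univ, fun x _ y _ θ σ hθ hσ hs => ?_⟩
  have h1 : (θ • x + σ • y).2 i = θ • (x.2 i) + σ • (y.2 i) := by
    simp [Prod.snd_add, Prod.smul_snd]
  show g ((θ • x + σ • y).2 i) ≤ θ • g (x.2 i) + σ • g (y.2 i)
  rw [h1]
  exact hg.2 (Set.mem_univ _) (Set.mem_univ _) hθ hσ hs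

set_option maxHeartbeats 1000000 in
lemma esg_R_convex (I : ℕ) (hI : 2 ≤ I) (a m : ℝ) (ha : 0 < a) (hm : 0 < m)
    (ham : (2 * (I : ℝ) - 4) / ((I : ℝ) - 1) ≤ a * m) :
    ConvexOn ℝ Set.univ (fun pd : (Fin I → ℝ) × (Fin I → ℝ) =>
      m / 2 * (∑ i, ((pd.1 i) ^ 2 + (pd.2 i) ^ 2))
        + (∑ i, (pd.2 i - pd.1 i) ^ 2) / (2 * a * ((I : ℝ) - 1))
        - (∑ i, pd.2 i - ∑ i, pd.1 i) ^ 2 / (2 * a * (I : ℝ))) := by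
  refine ⟨convex_univ, fun x _ y _ θ σ hθ hσ hs => ?_⟩
  simp only [smul_eq_mul]
  set w := θ • x + σ • y with hw
  have hw1 : ∀ i, w.1 i = θ * x.1 i + σ * y.1 i := by
    intro i; simp [hw, Prod.fst_add, Prod.smul_fst]
  have hw2 : ∀ i, w.2 i = θ * x.2 i + σ * y.2 i := by
    intro i; simp [hw, Prod.snd_add, Prod.smul_snd]
  have e1 : ∑ i, (w.1 i) ^ 2
      = θ * ∑ i, (x.1 i) ^ 2 + σ * ∑ i, (y.1 i) ^ 2
        - θ * σ * ∑ i, (x.1 i - y.1 i) ^ 2 := by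
    rw [show ∑ i, (w.1 i) ^ 2 = ∑ i, (θ * x.1 i + σ * y.1 i) ^ 2 from
      Finset.sum_congr rfl fun i _ => by rw [hw1 i]]
    exact esg_sum_sq_mix θ σ hs x.1 y.1
  have e2 : ∑ i, (w.2 i) ^ 2
      = θ * ∑ i, (x.2 i) ^ 2 + σ * ∑ i, (y.2 i) ^ 2
        - θ * σ * ∑ i, (x.2 i - y.2 i) ^ 2 := by
    rw [show ∑ i, (w.2 i) ^ 2 = ∑ i, (θ * x.2 i + σ * y.2 i) ^ 2 from
      Finset.sum_congr rfl fun i _ => by rw [hw2 i]]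
    exact esg_sum_sq_mix θ σ hs x.2 y.2
  have e3 : ∑ i, (w.2 i - w.1 i) ^ 2
      = θ * ∑ i, (x.2 i - x.1 i) ^ 2 + σ * ∑ i, (y.2 i - y.1 i) ^ 2
        - θ * σ * ∑ i, ((x.2 i - x.1 i) - (y.2 i - y.1 i)) ^ 2 := by
    rw [show ∑ i, (w.2 i - w.1 i) ^ 2
        = ∑ i, (θ * (x.2 i - x.1 i) + σ * (y.2 i - y.1 i)) ^ 2 from
      Finset.sum_congr rfl fun i _ => by rw [hw1 i, hw2 i]; ring]
    exact esg_sum_sq_mix θ σ hs _ _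
  have e4 : ∑ i, w.1 i = θ * ∑ i, x.1 i + σ * ∑ i, y.1 i := by
    rw [show ∑ i, w.1 i = ∑ i, (θ * x.1 i + σ * y.1 i) from
      Finset.sum_congr rfl fun i _ => hw1 i, Finset.sum_add_distrib,
      ← Finset.mul_sum, ← Finset.mul_sum]
  have e5 : ∑ i, w.2 i = θ * ∑ i, x.2 i + σ * ∑ i, y.2 i := by
    rw [show ∑ i, w.2 i = ∑ i, (θ * x.2 i + σ * y.2 i) from
      Finset.sum_congr rfl fun i _ => hw2 i, Finset.sum_add_distrib,
      ← Finset.mul_sum, ← Finset.mul_sum]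
  have e6 : (∑ i, w.2 i - ∑ i, w.1 i) ^ 2
      = θ * (∑ i, x.2 i - ∑ i, x.1 i) ^ 2 + σ * (∑ i, y.2 i - ∑ i, y.1 i) ^ 2
        - θ * σ * ((∑ i, x.2 i - ∑ i, x.1 i) - (∑ i, y.2 i - ∑ i, y.1 i)) ^ 2 := by
    rw [e4, e5, show θ * ∑ i, x.2 i + σ * ∑ i, y.2 i - (θ * ∑ i, x.1 i + σ * ∑ i, y.1 i)
        = θ * (∑ i, x.2 i - ∑ i, x.1 i) + σ * (∑ i, y.2 i - ∑ i, y.1 i) by ring]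
    exact esg_sq_mix θ σ _ _ hs
  have hQ := esg_quad_nonneg I hI a m ha hm ham
    (fun i => x.1 i - y.1 i) (fun i => x.2 i - y.2 i)
  rw [show (∑ i, (((fun i => x.1 i - y.1 i) i) ^ 2 + ((fun i => x.2 i - y.2 i) i) ^ 2))
      = ∑ i, (x.1 i - y.1 i) ^ 2 + ∑ i, (x.2 i - y.2 i) ^ 2 by
    rw [← Finset.sum_add_distrib]] at hQ
  rw [show (∑ i, ((fun i => x.2 i - y.2 i) i - (fun i => x.1 i - y.1 i) i) ^ 2)
      = ∑ i, ((x.2 i - x.1 i) - (y.2 i - y.1 i)) ^ 2 from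
    Finset.sum_congr rfl fun i _ => by ring] at hQ
  rw [show (∑ i, (fun i => x.2 i - y.2 i) i) = ∑ i, x.2 i - ∑ i, y.2 i by
    simp [Finset.sum_sub_distrib]] at hQ
  rw [show (∑ i, (fun i => x.1 i - y.1 i) i) = ∑ i, x.1 i - ∑ i, y.1 i by
    simp [Finset.sum_sub_distrib]] at hQ
  have hθσQ := mul_nonneg (mul_nonneg hθ hσ) hQ
  rw [Finset.sum_add_distrib, Finset.sum_add_distrib, Finset.sum_add_distrib,
    e1, e2, e3, e6]
  rw [show ((∑ i, x.2 i - ∑ i, x.1 i) - (∑ i, y.2 i - ∑ i, y.1 i))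
      = (∑ i, x.2 i - ∑ i, y.2 i - (∑ i, x.1 i - ∑ i, y.1 i)) by ring] at e6 ⊢
  set b1 := 2 * a * ((I:ℝ) - 1) with hb1
  set b2 := 2 * a * (I:ℝ) with hb2
  set Sx1 := ∑ i, (x.1 i) ^ 2 with hSx1
  set Sx2 := ∑ i, (x.2 i) ^ 2 with hSx2
  set Sy1 := ∑ i, (y.1 i) ^ 2 with hSy1
  set Sy2 := ∑ i, (y.2 i) ^ 2 with hSy2
  set D1 := ∑ i, (x.1 i - y.1 i) ^ 2 with hD1
  set D2 := ∑ i, (x.2 i - y.2 i) ^ 2 with hD2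
  set D3 := ∑ i, (x.2 i - x.1 i - (y.2 i - y.1 i)) ^ 2 with hD3
  set X := ∑ i, (x.2 i - x.1 i) ^ 2 with hX
  set Yv := ∑ i, (y.2 i - y.1 i) ^ 2 with hYv
  set P := (∑ i, x.2 i - ∑ i, x.1 i) ^ 2 with hP
  set Qv := (∑ i, y.2 i - ∑ i, y.1 i) ^ 2 with hQv
  set D4 := (∑ i, x.2 i - ∑ i, y.2 i - (∑ i, x.1 i - ∑ i, y.1 i)) ^ 2 with hD4
  have key : θ * (m / 2 * (Sx1 + Sx2) + X / b1 - P / b2)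
      + σ * (m / 2 * (Sy1 + Sy2) + Yv / b1 - Qv / b2)
      - (m / 2 * (θ * Sx1 + σ * Sy1 - θ * σ * D1 + (θ * Sx2 + σ * Sy2 - θ * σ * D2))
        + (θ * X + σ * Yv - θ * σ * D3) / b1 - (θ * P + σ * Qv - θ * σ * D4) / b2)
      = θ * σ * (m / 2 * (D1 + D2) + D3 / b1 - D4 / b2) := by ring
  linarith [hθσQ, key]

lemma esg_potential_convex (I : ℕ) (hI : 2 ≤ I) (a m : ℝ) (ha : 0 < a) (hm : 0 < m)
    (ham : (2 * (I : ℝ) - 4) / ((I : ℝ) - 1) ≤ a * m)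
    (f u : Fin I → ℝ → ℝ)
    (hf : ∀ i, ContDiff ℝ 2 (f i)) (hu : ∀ i, ContDiff ℝ 2 (u i))
    (hf'' : ∀ i, ∀ x : ℝ, m ≤ iteratedDeriv 2 (f i) x)
    (hu'' : ∀ i, ∀ x : ℝ, iteratedDeriv 2 (u i) x ≤ -m) :
    ConvexOn ℝ Set.univ (fun pd : (Fin I → ℝ) × (Fin I → ℝ) =>
      ∑ i, f i (pd.1 i) - ∑ i, u i (pd.2 i) +
        (∑ i, (pd.2 i - pd.1 i) ^ 2) / (2 * a * ((I : ℝ) - 1)) -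
        (∑ i, pd.2 i - ∑ i, pd.1 i) ^ 2 / (2 * a * (I : ℝ))) := by
  have hF1 : ConvexOn ℝ Set.univ (fun pd : (Fin I → ℝ) × (Fin I → ℝ) =>
      ∑ i, (f i (pd.1 i) - m / 2 * (pd.1 i) ^ 2)) :=
    esg_convexOn_sum Finset.univ convex_univ _ fun i _ =>
      esg_convexOn_coord1 (esg_convexOn_shift (hf i) (hf'' i)) i
  have hF2 : ConvexOn ℝ Set.univ (fun pd : (Fin I → ℝ) × (Fin I → ℝ) =>
      ∑ i, (-u i (pd.2 i) - m / 2 * (pd.2 i) ^ 2)) := by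
    refine esg_convexOn_sum Finset.univ convex_univ _ fun i _ =>
      esg_convexOn_coord2 (esg_convexOn_shift (g := fun x => -u i x) (hu i).neg ?_) i
    intro x
    rw [show (fun x => -u i x) = -u i from rfl, iteratedDeriv_neg]
    linarith [hu'' i x]
  have hR := esg_R_convex I hI a m ha hm ham
  have hsum := (hF1.add hF2).add hR
  have heq : (fun pd : (Fin I → ℝ) × (Fin I → ℝ) =>
      ∑ i, f i (pd.1 i) - ∑ i, u i (pd.2 i) +
        (∑ i, (pd.2 i - pd.1 i) ^ 2) / (2 * a * ((I : ℝ) - 1)) -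
        (∑ i, pd.2 i - ∑ i, pd.1 i) ^ 2 / (2 * a * (I : ℝ)))
      = ((fun pd : (Fin I → ℝ) × (Fin I → ℝ) =>
          ∑ i, (f i (pd.1 i) - m / 2 * (pd.1 i) ^ 2)) +
        (fun pd : (Fin I → ℝ) × (Fin I → ℝ) =>
          ∑ i, (-u i (pd.2 i) - m / 2 * (pd.2 i) ^ 2))) +
        (fun pd : (Fin I → ℝ) × (Fin I → ℝ) =>
          m / 2 * (∑ i, ((pd.1 i) ^ 2 + (pd.2 i) ^ 2))
            + (∑ i, (pd.2 i - pd.1 i) ^ 2) / (2 * a * ((I : ℝ) - 1))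
            - (∑ i, pd.2 i - ∑ i, pd.1 i) ^ 2 / (2 * a * (I : ℝ))) := by
    funext pd
    simp only [Pi.add_apply]
    rw [Finset.sum_sub_distrib, Finset.sum_sub_distrib, Finset.sum_add_distrib,
      ← Finset.mul_sum, ← Finset.mul_sum, Finset.sum_neg_distrib]
    ring
  rw [heq]
  exact hsum

end EsgAux

/-- Potential function of the energy sharing game. -/
noncomputable def potential (I : ℕ) (a : ℝ) (f u : Fin I → ℝ → ℝ)
    (pd : (Fin I → ℝ) × (Fin I → ℝ)) : ℝ :=
  ∑ i, f i (pd.1 i) - ∑ i, u i (pd.2 i) +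
    (∑ i, (pd.2 i - pd.1 i) ^ 2) / (2 * a * ((I : ℝ) - 1)) -
    (∑ i, pd.2 i - ∑ i, pd.1 i) ^ 2 / (2 * a * (I : ℝ))

/-- Lagrangian of the energy sharing game. -/
noncomputable def lagrangian (I : ℕ) (a : ℝ) (f u : Fin I → ℝ → ℝ)
    (pd : (Fin I → ℝ) × (Fin I → ℝ)) (lam : ℝ) : ℝ :=
  potential I a f u pd - lam * ∑ i, (pd.1 i - pd.2 i)

/-- Under assumptions A1 and A4, the Lagrangian of the energy sharing game has a
saddle point on `Y × ℝ`, where `Y` is the product of the capacity boxes. -/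
theorem lagrangian_has_saddle_point
    (I : ℕ) (hI : 2 ≤ I) (a m : ℝ) (ha : 0 < a) (hm : 0 < m)
    (ham : (2 * (I : ℝ) - 4) / ((I : ℝ) - 1) ≤ a * m)
    (f u : Fin I → ℝ → ℝ)
    (hf : ∀ i, ContDiff ℝ 2 (f i)) (hu : ∀ i, ContDiff ℝ 2 (u i))
    (hf'' : ∀ i, ∀ x : ℝ, m ≤ iteratedDeriv 2 (f i) x)
    (hu'' : ∀ i, ∀ x : ℝ, iteratedDeriv 2 (u i) x ≤ -m)
    (plo phi dlo dhi : Fin I → ℝ)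
    (Y : Set ((Fin I → ℝ) × (Fin I → ℝ)))
    (hY : Y = {pd | ∀ i, plo i ≤ pd.1 i ∧ pd.1 i ≤ phi i ∧
      dlo i ≤ pd.2 i ∧ pd.2 i ≤ dhi i})
    -- A1: the centralized problem is feasible
    (hfeas : ∃ pd0 ∈ Y, ∑ i, pd0.1 i = ∑ i, pd0.2 i) :
    ∃ pdstar ∈ Y, ∃ lamstar : ℝ,
      (∀ lam : ℝ, lagrangian I a f u pdstar lam ≤ lagrangian I a f u pdstar lamstar) ∧
      (∀ pd ∈ Y, lagrangian I a f u pdstar lamstar ≤ lagrangian I a f u pd lamstar) := by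
  classical
  set φ := potential I a f u with hφdef
  set c : (Fin I → ℝ) × (Fin I → ℝ) → ℝ := fun pd => ∑ i, (pd.1 i - pd.2 i) with hcdef
  -- smoothness of φ
  have hφ2 : ContDiff ℝ 2 φ := by
    rw [hφdef]
    unfold potential
    have h1 : ∀ i : Fin I, ContDiff ℝ 2 (fun pd : (Fin I → ℝ) × (Fin I → ℝ) => pd.1 i) :=
      fun i => (contDiff_apply ℝ ℝ i).comp contDiff_fst
    have h2 : ∀ i : Fin I, ContDiff ℝ 2 (fun pd : (Fin I → ℝ) × (Fin I → ℝ) => pd.2 i) :=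
      fun i => (contDiff_apply ℝ ℝ i).comp contDiff_snd
    refine ContDiff.sub (ContDiff.add (ContDiff.sub ?_ ?_) ?_) ?_
    · exact ContDiff.sum fun i _ => (hf i).comp (h1 i)
    · exact ContDiff.sum fun i _ => (hu i).comp (h2 i)
    · exact (ContDiff.sum fun i _ => ((h2 i).sub (h1 i)).pow 2).div_const _
    · exact (((ContDiff.sum fun i _ => h2 i).sub
        (ContDiff.sum fun i _ => h1 i)).pow 2).div_const _
  have hφcont : Continuous φ := hφ2.continuous
  have hφdiff : Differentiable ℝ φ := hφ2.differentiable (by norm_num)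
  have hccont : Continuous c := by
    rw [hcdef]
    exact continuous_finset_sum _ fun i _ =>
      ((continuous_apply i).comp continuous_fst).sub
        ((continuous_apply i).comp continuous_snd)
  have hconv : ConvexOn ℝ Set.univ φ := by
    rw [hφdef]
    have := esg_potential_convex I hI a m ha hm ham f u hf hu hf'' hu''
    convert this using 1
    rfl
  -- Y is compact and convex
  have hYeq : Y = (Set.univ.pi fun i => Set.Icc (plo i) (phi i)) ×ˢ
      (Set.univ.pi fun i => Set.Icc (dlo i) (dhi i)) := by
    rw [hY]; ext p
    simp only [Set.mem_setOf_eq, Set.mem_prod, Set.mem_pi, Set.mem_univ, Set.mem_Icc,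
      forall_true_left]
    constructor
    · intro h
      exact ⟨fun i => ⟨(h i).1, (h i).2.1⟩, fun i => ⟨(h i).2.2.1, (h i).2.2.2⟩⟩
    · intro h i
      exact ⟨(h.1 i).1, (h.1 i).2, (h.2 i).1, (h.2 i).2⟩
  have hYcomp : IsCompact Y := by
    rw [hYeq]
    exact (isCompact_univ_pi fun i => isCompact_Icc).prod
      (isCompact_univ_pi fun i => isCompact_Icc)
  have hYconv : Convex ℝ Y := by
    rw [hYeq]
    exact ((convex_pi fun i _ => convex_Icc _ _).prod
      (convex_pi fun i _ => convex_Icc _ _))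
  obtain ⟨pd0, hpd0Y, hpd0bal⟩ := hfeas
  have hmemY : ∀ p ∈ Y, ∀ i, plo i ≤ p.1 i ∧ p.1 i ≤ phi i ∧
      dlo i ≤ p.2 i ∧ p.2 i ≤ dhi i := by
    intro p hp
    rw [hY] at hp
    exact hp
  have hple : ∀ i, plo i ≤ phi i := fun i =>
    le_trans (hmemY pd0 hpd0Y i).1 (hmemY pd0 hpd0Y i).2.1
  have hdle : ∀ i, dlo i ≤ dhi i := fun i =>
    le_trans (hmemY pd0 hpd0Y i).2.2.1 (hmemY pd0 hpd0Y i).2.2.2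
  have hc0 : c pd0 = 0 := by
    rw [hcdef]
    simp only [Finset.sum_sub_distrib]
    rw [hpd0bal]; ring
  -- minimizer on the balanced slice
  have hKcomp : IsCompact (Y ∩ {pd | c pd = 0}) :=
    hYcomp.inter_right (isClosed_eq hccont continuous_const)
  have hKne : (Y ∩ {pd | c pd = 0}).Nonempty := ⟨pd0, hpd0Y, hc0⟩
  obtain ⟨pds, hpdsK, hmin⟩ := hKcomp.exists_isMinOn hKne hφcont.continuousOn
  have hminle : ∀ q ∈ Y, c q = 0 → φ pds ≤ φ q := fun q hq hcq =>
    (isMinOn_iff.mp hmin) q ⟨hq, hcq⟩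
  have hpdsY : pds ∈ Y := hpdsK.1
  have hcpds : c pds = 0 := hpdsK.2
  -- Lipschitz bound for φ on Y
  obtain ⟨M0, hM0pos, hLip⟩ : ∃ M : ℝ, 0 ≤ M ∧
      ∀ p ∈ Y, ∀ q ∈ Y, |φ p - φ q| ≤ M * ‖p - q‖ := by
    have hfd : Continuous (fderiv ℝ φ) := hφ2.continuous_fderiv (by norm_num)
    obtain ⟨M, hM⟩ := hYcomp.exists_bound_of_continuousOn hfd.continuousOn
    refine ⟨max M 0, le_max_right _ _, fun p hp q hq => ?_⟩
    have := hYconv.norm_image_sub_le_of_norm_fderiv_le (C := max M 0) (fun x _ => hφdiff x)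
      (fun x hx => le_trans (hM x hx) (le_max_left _ _)) hq hp
    simpa [Real.norm_eq_abs] using this
  -- linearity of c
  have hclin : ∀ (θ σ : ℝ) (p q : (Fin I → ℝ) × (Fin I → ℝ)),
      c (θ • p + σ • q) = θ * c p + σ * c q := by
    intro θ σ p q
    rw [hcdef]
    simp only [Prod.fst_add, Prod.snd_add, Prod.smul_fst, Prod.smul_snd, Pi.add_apply,
      Pi.smul_apply, smul_eq_mul]
    rw [Finset.mul_sum, Finset.mul_sum, ← Finset.sum_add_distrib]
    exact Finset.sum_congr rfl fun i _ => by ring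
  -- the multiplier
  have key : ∃ lam : ℝ, ∀ pd ∈ Y, lam * c pd ≤ φ pd - φ pds := by
    by_cases hplus : ∃ q ∈ Y, 0 < c q
    · by_cases hminus : ∃ r ∈ Y, c r < 0
      · -- main case: both signs occur
        obtain ⟨q, hqY, hq⟩ := hplus
        obtain ⟨r, hrY, hr⟩ := hminus
        have slope : ∀ p1 ∈ Y, c p1 < 0 → ∀ p2 ∈ Y, 0 < c p2 →
            (φ p1 - φ pds) / c p1 ≤ (φ p2 - φ pds) / c p2 := by
          intro p1 h1Y h1 p2 h2Y h2
          have hden : 0 < c p2 - c p1 := by linarith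
          set θ := c p2 / (c p2 - c p1) with hθdef
          set σ := -c p1 / (c p2 - c p1) with hσdef
          have hθ : 0 ≤ θ := div_nonneg h2.le hden.le
          have hσ : 0 ≤ σ := div_nonneg (by linarith) hden.le
          have hsum : θ + σ = 1 := by
            rw [hθdef, hσdef]; field_simp; ring
          have hwY : θ • p1 + σ • p2 ∈ Y := hYconv h1Y h2Y hθ hσ hsum
          have hcw : c (θ • p1 + σ • p2) = 0 := by
            rw [hclin, hθdef, hσdef]; field_simp; ring
          have hφw : φ pds ≤ φ (θ • p1 + σ • p2) := hminle _ hwY hcw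
          have hconvw : φ (θ • p1 + σ • p2) ≤ θ * φ p1 + σ * φ p2 := by
            simpa [smul_eq_mul] using
              hconv.2 (Set.mem_univ p1) (Set.mem_univ p2) hθ hσ hsum
          have h1' : φ pds ≤ θ * φ p1 + σ * φ p2 := le_trans hφw hconvw
          have h2' : φ pds * (c p2 - c p1) ≤ c p2 * φ p1 - c p1 * φ p2 := by
            have heq : θ * φ p1 + σ * φ p2
                = (c p2 * φ p1 - c p1 * φ p2) / (c p2 - c p1) := by
              rw [hθdef, hσdef]; field_simp; ring
            rw [heq, le_div_iff₀ hden] at h1'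
            exact h1'
          rw [show (φ p1 - φ pds) / c p1 = (-(φ p1 - φ pds)) / (-(c p1)) by
            rw [neg_div_neg_eq], div_le_div_iff₀ (by linarith) h2]
          nlinarith [h2']
        set S : Set ℝ := {t | ∃ p, p ∈ Y ∧ 0 < c p ∧ t = (φ p - φ pds) / c p} with hS
        have hSne : S.Nonempty := ⟨_, q, hqY, hq, rfl⟩
        have hSbdd : BddBelow S := by
          refine ⟨(φ r - φ pds) / c r, fun t ht => ?_⟩
          obtain ⟨p, hpY, hp, rfl⟩ := ht
          exact slope r hrY hr p hpY hp
        refine ⟨sInf S, fun pd hpd => ?_⟩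
        rcases lt_trichotomy (c pd) 0 with hneg | hzero | hpos
        · have hle : (φ pd - φ pds) / c pd ≤ sInf S := by
            refine le_csInf hSne fun t ht => ?_
            obtain ⟨p, hpY, hp, rfl⟩ := ht
            exact slope pd hpd hneg p hpY hp
          have hmul := mul_le_mul_of_nonpos_right hle hneg.le
          rw [div_mul_cancel₀ _ hneg.ne] at hmul
          linarith
        · rw [hzero, mul_zero]
          linarith [hminle pd hpd hzero]
        · have hle : sInf S ≤ (φ pd - φ pds) / c pd := csInf_le hSbdd ⟨pd, hpd, hpos, rfl⟩
          have hmul := mul_le_mul_of_nonneg_right hle hpos.le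
          rw [div_mul_cancel₀ _ hpos.ne'] at hmul
          linarith
      · -- c is nonnegative on Y
        push_neg at hminus
        set z : (Fin I → ℝ) × (Fin I → ℝ) := (plo, dhi) with hz
        have hzY : z ∈ Y := by
          rw [hY]
          intro i
          exact ⟨le_refl _, hple i, hdle i, le_refl _⟩
        have hdiff : ∀ p : (Fin I → ℝ) × (Fin I → ℝ),
            c p - c z = ∑ i, (p.1 i - plo i) + ∑ i, (dhi i - p.2 i) := by
          intro p
          rw [hcdef]
          simp only [hz]
          rw [← Finset.sum_add_distrib, ← Finset.sum_sub_distrib]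
          exact Finset.sum_congr rfl fun i _ => by ring
        have hcz : c z = 0 := by
          have h1 : 0 ≤ c z := hminus z hzY
          have h2 : c z ≤ c pd0 := by
            have := hdiff pd0
            have ha1 : 0 ≤ ∑ i, (pd0.1 i - plo i) :=
              Finset.sum_nonneg fun i _ => by linarith [(hmemY pd0 hpd0Y i).1]
            have ha2 : 0 ≤ ∑ i, (dhi i - pd0.2 i) :=
              Finset.sum_nonneg fun i _ => by linarith [(hmemY pd0 hpd0Y i).2.2.2]
            linarith
          rw [hc0] at h2
          linarith
        have hnorm : ∀ p ∈ Y, ‖p - z‖ ≤ c p := by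
          intro p hp
          have hd := hdiff p
          rw [hcz, sub_zero] at hd
          have ha1 : 0 ≤ ∑ i, (p.1 i - plo i) :=
            Finset.sum_nonneg fun i _ => by linarith [(hmemY p hp i).1]
          have ha2 : 0 ≤ ∑ i, (dhi i - p.2 i) :=
            Finset.sum_nonneg fun i _ => by linarith [(hmemY p hp i).2.2.2]
          have hcp : 0 ≤ c p := hminus p hp
          rw [Prod.norm_def]
          refine max_le ?_ ?_
          · rw [pi_norm_le_iff_of_nonneg hcp]
            intro i
            have h1 : (p - z).1 i = p.1 i - plo i := by
              simp [hz, Prod.fst_sub]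
            rw [h1, Real.norm_eq_abs, abs_of_nonneg (by linarith [(hmemY p hp i).1])]
            have hsing : p.1 i - plo i ≤ ∑ j, (p.1 j - plo j) :=
              Finset.single_le_sum
                (fun j _ => by show (0:ℝ) ≤ p.1 j - plo j; linarith [(hmemY p hp j).1])
                (Finset.mem_univ i)
            linarith
          · rw [pi_norm_le_iff_of_nonneg hcp]
            intro i
            have h1 : (p - z).2 i = p.2 i - dhi i := by
              simp [hz, Prod.snd_sub]
            rw [h1, Real.norm_eq_abs, abs_of_nonpos (by linarith [(hmemY p hp i).2.2.2])]
            have hsing : dhi i - p.2 i ≤ ∑ j, (dhi j - p.2 j) :=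
              Finset.single_le_sum
                (fun j _ => by show (0:ℝ) ≤ dhi j - p.2 j; linarith [(hmemY p hp j).2.2.2])
                (Finset.mem_univ i)
            linarith
        refine ⟨-M0, fun pd hpd => ?_⟩
        have h1 := hLip pd hpd z hzY
        have h2 := hnorm pd hpd
        have h3 : M0 * ‖pd - z‖ ≤ M0 * c pd := mul_le_mul_of_nonneg_left h2 hM0pos
        have h4 : φ pds ≤ φ z := hminle z hzY hcz
        have h5 := neg_abs_le (φ pd - φ z)
        nlinarith
    · -- c is nonpositive on Y
      push_neg at hplus
      set z : (Fin I → ℝ) × (Fin I → ℝ) := (phi, dlo) with hz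
      have hzY : z ∈ Y := by
        rw [hY]
        intro i
        exact ⟨hple i, le_refl _, le_refl _, hdle i⟩
      have hdiff : ∀ p : (Fin I → ℝ) × (Fin I → ℝ),
          c z - c p = ∑ i, (phi i - p.1 i) + ∑ i, (p.2 i - dlo i) := by
        intro p
        rw [hcdef]
        simp only [hz]
        rw [← Finset.sum_add_distrib, ← Finset.sum_sub_distrib]
        exact Finset.sum_congr rfl fun i _ => by ring
      have hcz : c z = 0 := by
        have h1 : c z ≤ 0 := hplus z hzY
        have h2 : c pd0 ≤ c z := by
          have := hdiff pd0
          have ha1 : 0 ≤ ∑ i, (phi i - pd0.1 i) :=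
            Finset.sum_nonneg fun i _ => by linarith [(hmemY pd0 hpd0Y i).2.1]
          have ha2 : 0 ≤ ∑ i, (pd0.2 i - dlo i) :=
            Finset.sum_nonneg fun i _ => by linarith [(hmemY pd0 hpd0Y i).2.2.1]
          linarith
        rw [hc0] at h2
        linarith
      have hnorm : ∀ p ∈ Y, ‖p - z‖ ≤ -c p := by
        intro p hp
        have hd := hdiff p
        rw [hcz, zero_sub] at hd
        have hcp : c p ≤ 0 := hplus p hp
        have hcpn : 0 ≤ -c p := by linarith
        rw [Prod.norm_def]
        refine max_le ?_ ?_
        · rw [pi_norm_le_iff_of_nonneg hcpn]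
          intro i
          have h1 : (p - z).1 i = p.1 i - phi i := by
            simp [hz, Prod.fst_sub]
          rw [h1, Real.norm_eq_abs, abs_of_nonpos (by linarith [(hmemY p hp i).2.1])]
          have hsing : phi i - p.1 i ≤ ∑ j, (phi j - p.1 j) :=
            Finset.single_le_sum
              (fun j _ => by show (0:ℝ) ≤ phi j - p.1 j; linarith [(hmemY p hp j).2.1])
              (Finset.mem_univ i)
          have ha2 : 0 ≤ ∑ i, (p.2 i - dlo i) :=
            Finset.sum_nonneg fun i _ => by linarith [(hmemY p hp i).2.2.1]
          linarith
        · rw [pi_norm_le_iff_of_nonneg hcpn]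
          intro i
          have h1 : (p - z).2 i = p.2 i - dlo i := by
            simp [hz, Prod.snd_sub]
          rw [h1, Real.norm_eq_abs, abs_of_nonneg (by linarith [(hmemY p hp i).2.2.1])]
          have hsing : p.2 i - dlo i ≤ ∑ j, (p.2 j - dlo j) :=
            Finset.single_le_sum
              (fun j _ => by show (0:ℝ) ≤ p.2 j - dlo j; linarith [(hmemY p hp j).2.2.1])
              (Finset.mem_univ i)
          have ha1 : 0 ≤ ∑ i, (phi i - p.1 i) :=
            Finset.sum_nonneg fun i _ => by linarith [(hmemY p hp i).2.1]
          linarith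
      refine ⟨M0, fun pd hpd => ?_⟩
      have h1 := hLip pd hpd z hzY
      have h2 := hnorm pd hpd
      have h3 : M0 * ‖pd - z‖ ≤ M0 * (-c pd) := mul_le_mul_of_nonneg_left h2 hM0pos
      have h4 : φ pds ≤ φ z := hminle z hzY hcz
      have h5 := neg_abs_le (φ pd - φ z)
      nlinarith
  obtain ⟨lam, hlam⟩ := key
  refine ⟨pds, hpdsY, lam, ?_, ?_⟩
  · intro l
    have h0 : ∑ i, (pds.1 i - pds.2 i) = 0 := hcpds
    simp only [lagrangian, h0, mul_zero]
    exact le_rfl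
  · intro pd hpd
    have h := hlam pd hpd
    have h0 : ∑ i, (pds.1 i - pds.2 i) = 0 := hcpds
    simp only [lagrangian, h0, mul_zero, sub_zero]
    have hcp : c pd = ∑ i, (pd.1 i - pd.2 i) := by rw [hcdef]
    rw [hcp] at h
    have hφp : φ pd = potential I a f u pd := by rw [hφdef]
    have hφs : φ pds = potential I a f u pds := by rw [hφdef]
    rw [hφp, hφs] at h
    linarith
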